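/- Let p ≥ 3 be a prime and A, C ∈ ℚ_p with |A|_p < 1, |C|_p < 1, |A|_p ≠ |C|_p and |A|_p² < |C|_p, let f(x) = (Ax² + 1)/(Cx² + 1), and let x₀ be the unique fixed point of f in ℰ_p. Then f has a fixed point different from x₀ if and only if −C is a square in ℚ_p; in that case there are exactly two such fixed points x₁, x₂, both are repelling (|f'(x_i)|_p > 1 for i = 1,2), and |x₁|_p = |x₂|_p = |C|_p^{−1/2}. -/

import Mathlib

set_option maxHeartbeats 1000000

section Helpers
variable {p : ℕ} [Fact p.Prime]

lemma norm_two_padic (hp : p ≠ 2) : ‖(2 : ℚ_[p])‖ = 1 := by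
  have h1 : ‖((2:ℤ) : ℚ_[p])‖ ≤ 1 := Padic.norm_int_le_one 2
  have h2 : ¬ ‖((2:ℤ) : ℚ_[p])‖ < 1 := by
    rw [Padic.norm_intCast_lt_one_iff]
    intro h
    have : p ∣ 2 := by exact_mod_cast h
    exact hp ((Nat.prime_dvd_prime_iff_eq Fact.out Nat.prime_two).mp this)
  push_cast at h1 h2
  linarith [lt_or_eq_of_le h1]

lemma norm_add_eq_right {a b : ℚ_[p]} (h : ‖a‖ < ‖b‖) : ‖a + b‖ = ‖b‖ := by
  rw [Padic.add_eq_max_of_ne (ne_of_lt h), max_eq_right h.le]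

lemma isSquare_of_norm_sub_one_lt (hp : p ≠ 2) {u : ℚ_[p]} (h : ‖u - 1‖ < 1) :
    IsSquare u := by
  have hu1 : ‖u‖ ≤ 1 := by
    have : u = (u - 1) + 1 := by ring
    rw [this]
    calc ‖(u-1) + 1‖ ≤ max ‖u-1‖ ‖(1:ℚ_[p])‖ := Padic.nonarchimedean _ _
    _ ≤ 1 := by rw [norm_one]; exact max_le h.le le_rfl
  set a : ℤ_[p] := ⟨u, hu1⟩ with ha
  set F : Polynomial ℤ_[p] := Polynomial.X ^ 2 - Polynomial.C a with hF
  have hder : F.derivative = Polynomial.C 2 * Polynomial.X := by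
    simp [hF, Polynomial.derivative_pow]
  have hcond : ‖F.eval 1‖ < ‖F.derivative.eval 1‖ ^ 2 := by
    have e1 : F.eval 1 = 1 - a := by simp [hF]
    have e2 : F.derivative.eval 1 = 2 := by simp [hder]
    rw [e1, e2]
    have : ‖(1 - a : ℤ_[p])‖ = ‖u - 1‖ := by
      rw [PadicInt.norm_def]
      push_cast
      exact norm_sub_rev _ _
    rw [this]
    have h2 : ‖(2:ℤ_[p])‖ = 1 := by
      rw [PadicInt.norm_def]; exact norm_two_padic hp
    rw [h2]; simpa using h
  obtain ⟨z, hz, -⟩ := hensels_lemma hcond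
  refine ⟨(z : ℚ_[p]), ?_⟩
  have hz2 : z ^ 2 = a := by
    have := hz
    simp [hF, sub_eq_zero] at this
    exact this
  have : ((z ^ 2 : ℤ_[p]) : ℚ_[p]) = u := by rw [hz2]
  rw [← this]; push_cast; ring

end Helpers



/-- The mapping `f(x) = (Ax² + 1)/(Cx² + 1)` on `ℚ_p`. -/
noncomputable def fracMap (p : ℕ) [Fact p.Prime] (A C : ℚ_[p]) (x : ℚ_[p]) : ℚ_[p] :=
  (A * x ^ 2 + 1) / (C * x ^ 2 + 1)

/-- `ℰ_p = {x ∈ ℚ_p : |x|_p = 1, |x - 1|_p < p^{-1/(p-1)}}`. -/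
noncomputable def padicExpDomain (p : ℕ) [Fact p.Prime] : Set ℚ_[p] :=
  {x | ‖x‖ = 1 ∧ ‖x - 1‖ < (p : ℝ) ^ (-(1 : ℝ) / ((p : ℝ) - 1))}

/-- for `p ≥ 3` prime, `|A|_p, |C|_p < 1`, `|A|_p ≠ |C|_p`, `|A|_p² < |C|_p`,
and `x₀` the unique fixed point of `f` in `ℰ_p`: `f` has a fixed point different from `x₀`
iff `-C` is a square in `ℚ_p`; in that case there are exactly two such fixed points
`x₁, x₂`, both repelling, with `|x₁|_p = |x₂|_p = 1/√|C|_p`. -/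
theorem fracMap_extra_fixed_points_small_A
    (p : ℕ) [Fact p.Prime] (hp : 3 ≤ p)
    (A C : ℚ_[p]) (hA : ‖A‖ < 1) (hC : ‖C‖ < 1) (hAC : ‖A‖ ≠ ‖C‖)
    (hA2C : ‖A‖ ^ 2 < ‖C‖)
    (x₀ : ℚ_[p]) (hx₀ : x₀ ∈ padicExpDomain p ∧ fracMap p A C x₀ = x₀)
    (hx₀uniq : ∀ y ∈ padicExpDomain p, fracMap p A C y = y → y = x₀) :
    ((∃ x : ℚ_[p], C * x ^ 2 + 1 ≠ 0 ∧ fracMap p A C x = x ∧ x ≠ x₀) ↔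
      IsSquare (-C)) ∧
    (IsSquare (-C) →
      ∃ x₁ x₂ : ℚ_[p], x₁ ≠ x₂ ∧
        (∀ x : ℚ_[p], (C * x ^ 2 + 1 ≠ 0 ∧ fracMap p A C x = x ∧ x ≠ x₀) ↔
          (x = x₁ ∨ x = x₂)) ∧
        1 < ‖deriv (fracMap p A C) x₁‖ ∧ 1 < ‖deriv (fracMap p A C) x₂‖ ∧
        ‖x₁‖ = 1 / Real.sqrt ‖C‖ ∧ ‖x₂‖ = 1 / Real.sqrt ‖C‖) := by
  have hp2 : p ≠ 2 := by omega
  have h2 : ‖(2:ℚ_[p])‖ = 1 := norm_two_padic hp2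
  have h20 : (2:ℚ_[p]) ≠ 0 := by
    intro h; rw [h] at h2; simp at h2
  have hCpos : (0:ℝ) < ‖C‖ := lt_of_le_of_lt (by positivity) hA2C
  have hC0 : C ≠ 0 := by
    intro h; rw [h] at hCpos; simp at hCpos
  obtain ⟨⟨hx₀n, _⟩, hx₀f⟩ := hx₀
  have hx₀0 : x₀ ≠ 0 := by
    intro h; rw [h] at hx₀n; simp at hx₀n
  -- denominator at x₀
  have hnCx₀ : ‖C * x₀ ^ 2‖ = ‖C‖ := by
    rw [norm_mul, norm_pow, hx₀n]; ring
  have hden₀ : ‖C * x₀ ^ 2 + 1‖ = 1 := by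
    rw [show (1:ℝ) = ‖(1:ℚ_[p])‖ by simp]
    exact norm_add_eq_right (by rw [hnCx₀]; simpa using hC)
  have hden₀0 : C * x₀ ^ 2 + 1 ≠ 0 := by
    intro h; rw [h] at hden₀; simp at hden₀
  have hg0 : C * x₀ ^ 3 - A * x₀ ^ 2 + x₀ - 1 = 0 := by
    have h := hx₀f
    unfold fracMap at h
    rw [div_eq_iff hden₀0] at h
    linear_combination -h
  set M : ℝ := max ‖A‖ ‖C‖ with hM
  have hMpos : 0 < M := lt_of_lt_of_le hCpos (le_max_right _ _)
  have hM1 : M < 1 := max_lt hA hC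
  have hM2 : M ^ 2 < ‖C‖ := by
    rcases max_cases ‖A‖ ‖C‖ with ⟨h1, _⟩ | ⟨h1, _⟩ <;> rw [hM, h1]
    · exact hA2C
    · nlinarith
  obtain ⟨β, hβdef⟩ : ∃ β : ℚ_[p], β = C * x₀ - A := ⟨_, rfl⟩
  obtain ⟨γ, hγdef⟩ : ∃ γ : ℚ_[p], γ = 1 + C * x₀ ^ 2 - A * x₀ := ⟨_, rfl⟩
  have hβn : ‖β‖ = M := by
    rw [hβdef, sub_eq_add_neg, Padic.add_eq_max_of_ne, norm_neg, norm_mul, hx₀n,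
      mul_one, max_comm]
    rw [norm_neg, norm_mul, hx₀n, mul_one]
    exact fun h => hAC h.symm
  have hγx₀ : x₀ * γ = 1 := by rw [hγdef]; linear_combination hg0
  have hγn : ‖γ‖ = 1 := by
    have := congrArg (‖·‖) hγx₀
    simp only [norm_mul, norm_one, hx₀n, one_mul] at this
    exact this
  have hγ0 : γ ≠ 0 := by
    intro h; rw [h] at hγn; simp at hγn
  have hγ1 : ‖γ - 1‖ = M := by
    have : γ - 1 = x₀ * β := by rw [hγdef, hβdef]; ring
    rw [this, norm_mul, hx₀n, one_mul, hβn]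
  -- cubic factorization
  have hfac : ∀ x : ℚ_[p], C * x ^ 3 - A * x ^ 2 + x - 1
      = (x - x₀) * (C * x ^ 2 + β * x + γ) := by
    intro x
    rw [hβdef, hγdef]
    linear_combination hg0
  -- discriminant
  obtain ⟨D, hDdef⟩ : ∃ D : ℚ_[p], D = β ^ 2 - 4 * C * γ := ⟨_, rfl⟩
  have h4 : ‖(4:ℚ_[p])‖ = 1 := by
    rw [show (4:ℚ_[p]) = 2 * 2 by norm_num, norm_mul, h2]; ring
  have hen : ‖-(4 * C * γ)‖ = ‖C‖ := by
    rw [norm_neg, norm_mul, norm_mul, h4, hγn]; ring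
  have hβ2 : ‖β ^ 2‖ < ‖C‖ := by rw [norm_pow, hβn]; exact hM2
  have hDn : ‖D‖ = ‖C‖ := by
    rw [hDdef, sub_eq_add_neg]
    rw [show ‖C‖ = ‖-(4*C*γ)‖ from hen.symm] at hβ2 ⊢
    exact norm_add_eq_right hβ2
  have hD0 : D ≠ 0 := by
    intro h; rw [h] at hDn; simp at hDn
    exact absurd hDn.symm (ne_of_gt hCpos)
  -- IsSquare D ↔ IsSquare (-C)
  have he0 : -(4 * C * γ) ≠ 0 := by
    intro h; rw [h] at hen; simp at hen; exact absurd hen.symm (ne_of_gt hCpos)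
  have hu : IsSquare (D / (-(4 * C * γ))) := by
    apply isSquare_of_norm_sub_one_lt hp2
    have : D / (-(4 * C * γ)) - 1 = β ^ 2 / (-(4 * C * γ)) := by
      field_simp
      rw [hDdef]; ring
    rw [this, norm_div, hen]
    rw [norm_pow, hβn]
    rw [div_lt_one hCpos]
    exact hM2
  have hγsq : IsSquare γ := by
    apply isSquare_of_norm_sub_one_lt hp2
    rw [hγ1]; exact hM1
  obtain ⟨v, hv⟩ := hu
  obtain ⟨w, hw⟩ := hγsq
  obtain ⟨t, htdef⟩ : ∃ t : ℚ_[p], t = 2 * w * v := ⟨_, rfl⟩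
  have ht : D = -C * (t * t) := by
    have hDe : D = (-(4 * C * γ)) * (D / (-(4 * C * γ))) := by field_simp
    rw [htdef]
    calc D = (-(4 * C * γ)) * (D / (-(4 * C * γ))) := hDe
    _ = -C * (2 * w * v * (2 * w * v)) := by rw [hv]; nth_rewrite 1 [hw]; ring
  have ht0 : t ≠ 0 := by
    intro h; rw [h] at ht; simp at ht; exact hD0 ht
  have hsq : IsSquare D ↔ IsSquare (-C) := by
    constructor
    · rintro ⟨s, hs⟩
      refine ⟨s / t, ?_⟩
      rw [div_mul_div_comm, eq_div_iff (mul_ne_zero ht0 ht0)]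
      linear_combination hs - ht
    · rintro ⟨r, hr⟩
      exact ⟨r * t, by linear_combination ht + (t * t) * hr⟩
  -- derivative formula
  have hderiv : ∀ x : ℚ_[p], C * x ^ 2 + 1 ≠ 0 →
      deriv (fracMap p A C) x = 2 * x * (A - C) / (C * x ^ 2 + 1) ^ 2 := by
    intro x hx
    have h1 : HasDerivAt (fun y : ℚ_[p] => A * y ^ 2 + 1) (A * (2 * x)) x := by
      simpa using ((hasDerivAt_pow 2 x).const_mul A).add_const 1
    have hdd : HasDerivAt (fun y : ℚ_[p] => C * y ^ 2 + 1) (C * (2 * x)) x := by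
      simpa using ((hasDerivAt_pow 2 x).const_mul C).add_const 1
    have hd := (h1.div hdd hx).deriv
    have hfun : fracMap p A C = ((fun y : ℚ_[p] => A * y ^ 2 + 1) / fun y => C * y ^ 2 + 1) := rfl
    rw [hfun, hd, div_eq_div_iff (pow_ne_zero 2 hx) (pow_ne_zero 2 hx)]
    ring
  have hAC' : ‖A - C‖ = M := by
    rw [sub_eq_add_neg, Padic.add_eq_max_of_ne (by rw [norm_neg]; exact hAC), norm_neg]
  set sc : ℝ := Real.sqrt ‖C‖ with hscdef
  have hsc2 : sc ^ 2 = ‖C‖ := Real.sq_sqrt hCpos.le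
  have hscpos : 0 < sc := Real.sqrt_pos.mpr hCpos
  have hsc1 : sc < 1 := by nlinarith
  have hMsc : M < sc := by nlinarith
  -- fixed points other than x₀ are roots of the quadratic
  have hqzero : ∀ x : ℚ_[p], C * x ^ 2 + 1 ≠ 0 → fracMap p A C x = x → x ≠ x₀ →
      C * x ^ 2 + β * x + γ = 0 := by
    intro x hd0 hfix hne
    have hgx : C * x ^ 3 - A * x ^ 2 + x - 1 = 0 := by
      have h := hfix
      unfold fracMap at h
      rw [div_eq_iff hd0] at h
      linear_combination -h
    have h0 : (x - x₀) * (C * x ^ 2 + β * x + γ) = 0 := by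
      rw [← hfac x]; exact hgx
    rcases mul_eq_zero.mp h0 with h' | h'
    · exact absurd (sub_eq_zero.mp h') hne
    · exact h'
  -- roots of the quadratic with the right norm are fixed points, repelling
  have hkey : ∀ x : ℚ_[p], C * x ^ 2 + β * x + γ = 0 → ‖x‖ = 1 / sc →
      (C * x ^ 2 + 1 ≠ 0 ∧ fracMap p A C x = x ∧ x ≠ x₀) ∧
        1 < ‖deriv (fracMap p A C) x‖ := by
    intro x hq hxn
    have hden : C * x ^ 2 + 1 = (1 - γ) + (-(β * x)) := by linear_combination hq
    have h1γ : ‖1 - γ‖ = M := by rw [norm_sub_rev]; exact hγ1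
    have hβx : ‖-(β * x)‖ = M / sc := by
      rw [norm_neg, norm_mul, hβn, hxn]; ring
    have hlt : ‖1 - γ‖ < ‖-(β * x)‖ := by
      rw [h1γ, hβx, lt_div_iff₀ hscpos]; nlinarith
    have hdn : ‖C * x ^ 2 + 1‖ = M / sc := by
      rw [hden, norm_add_eq_right hlt, hβx]
    have hdpos : (0:ℝ) < ‖C * x ^ 2 + 1‖ := by rw [hdn]; positivity
    have hd0 : C * x ^ 2 + 1 ≠ 0 := by
      intro h; rw [h] at hdpos; simp at hdpos
    have hfix : fracMap p A C x = x := by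
      show (A * x ^ 2 + 1) / (C * x ^ 2 + 1) = x
      rw [div_eq_iff hd0]
      linear_combination -hfac x - (x - x₀) * hq
    have hne : x ≠ x₀ := by
      intro h
      rw [h, hx₀n] at hxn
      rw [eq_div_iff (ne_of_gt hscpos), one_mul] at hxn
      linarith
    refine ⟨⟨hd0, hfix, hne⟩, ?_⟩
    rw [hderiv x hd0, norm_div, norm_pow, hdn, norm_mul, norm_mul, h2, one_mul, hxn, hAC']
    have he : (1 / sc * M) / ((M / sc) ^ 2) = sc / M := by
      field_simp
    rw [he, lt_div_iff₀ hMpos, one_mul]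
    exact hMsc
  -- the main existence statement
  have hmain : IsSquare (-C) →
      ∃ x₁ x₂ : ℚ_[p], x₁ ≠ x₂ ∧
        (∀ x : ℚ_[p], (C * x ^ 2 + 1 ≠ 0 ∧ fracMap p A C x = x ∧ x ≠ x₀) ↔
          (x = x₁ ∨ x = x₂)) ∧
        1 < ‖deriv (fracMap p A C) x₁‖ ∧ 1 < ‖deriv (fracMap p A C) x₂‖ ∧
        ‖x₁‖ = 1 / sc ∧ ‖x₂‖ = 1 / sc := by
    intro hsC
    obtain ⟨s, hs⟩ := hsq.mpr hsC
    have hs0 : s ≠ 0 := by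
      intro h; rw [h, mul_zero] at hs; exact hD0 hs
    have hsn : ‖s‖ = sc := by
      have h1 : ‖s‖ * ‖s‖ = ‖C‖ := by
        rw [← norm_mul, ← hs, hDn]
      nlinarith [norm_nonneg s]
    obtain ⟨x₁, hx₁def⟩ : ∃ y : ℚ_[p], y = (-β + s) / (2 * C) := ⟨_, rfl⟩
    obtain ⟨x₂, hx₂def⟩ : ∃ y : ℚ_[p], y = (-β - s) / (2 * C) := ⟨_, rfl⟩
    have h2C : (2:ℚ_[p]) * C ≠ 0 := mul_ne_zero h20 hC0
    have h2Cn : ‖(2:ℚ_[p]) * C‖ = ‖C‖ := by rw [norm_mul, h2, one_mul]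
    have hx₁n : ‖x₁‖ = 1 / sc := by
      rw [hx₁def, norm_div, h2Cn,
        norm_add_eq_right (by rw [norm_neg, hβn, hsn]; exact hMsc), hsn, ← hsc2]
      rw [pow_two]
      field_simp
    have hx₂n : ‖x₂‖ = 1 / sc := by
      rw [hx₂def, sub_eq_add_neg, norm_div, h2Cn,
        norm_add_eq_right (by rw [norm_neg, norm_neg, hβn, hsn]; exact hMsc),
        norm_neg, hsn, ← hsc2]
      rw [pow_two]
      field_simp
    have hq1 : C * x₁ ^ 2 + β * x₁ + γ = 0 := by
      have h := hs
      rw [hDdef] at h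
      have hmul : (4 * C) * (C * x₁ ^ 2 + β * x₁ + γ) = 0 := by
        rw [hx₁def]
        field_simp
        linear_combination (-4) * h
      rcases mul_eq_zero.mp hmul with h' | h'
      · exact absurd h' (mul_ne_zero (by norm_num : (4:ℚ_[p]) ≠ 0) hC0)
      · exact h'
    have hq2 : C * x₂ ^ 2 + β * x₂ + γ = 0 := by
      have h := hs
      rw [hDdef] at h
      have hmul : (4 * C) * (C * x₂ ^ 2 + β * x₂ + γ) = 0 := by
        rw [hx₂def]
        field_simp
        linear_combination (-4) * h
      rcases mul_eq_zero.mp hmul with h' | h'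
      · exact absurd h' (mul_ne_zero (by norm_num : (4:ℚ_[p]) ≠ 0) hC0)
      · exact h'
    have hqfac : ∀ x : ℚ_[p], C * x ^ 2 + β * x + γ = C * (x - x₁) * (x - x₂) := by
      intro x
      have h := hs
      rw [hDdef] at h
      have hmul : (4 * C) * ((C * x ^ 2 + β * x + γ) - C * (x - x₁) * (x - x₂)) = 0 := by
        rw [hx₁def, hx₂def]
        field_simp
        linear_combination (-4) * h
      rcases mul_eq_zero.mp hmul with h' | h'
      · exact absurd h' (mul_ne_zero (by norm_num : (4:ℚ_[p]) ≠ 0) hC0)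
      · exact sub_eq_zero.mp h'
    refine ⟨x₁, x₂, ?_, ?_, (hkey x₁ hq1 hx₁n).2, (hkey x₂ hq2 hx₂n).2, hx₁n, hx₂n⟩
    · intro h
      have hd : x₁ - x₂ = s / C := by
        rw [hx₁def, hx₂def]
        field_simp
        ring
      rw [h, sub_self] at hd
      exact hs0 (by simpa [hC0] using hd.symm)
    · intro x
      constructor
      · rintro ⟨hd0, hfix, hne⟩
        have hqx := hqzero x hd0 hfix hne
        have h0 : C * (x - x₁) * (x - x₂) = 0 := by rw [← hqfac x]; exact hqx
        rcases mul_eq_zero.mp h0 with h' | h'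
        · rcases mul_eq_zero.mp h' with h'' | h''
          · exact absurd h'' hC0
          · exact Or.inl (sub_eq_zero.mp h'')
        · exact Or.inr (sub_eq_zero.mp h')
      · rintro (h | h)
        · subst h; exact (hkey _ hq1 hx₁n).1
        · subst h; exact (hkey _ hq2 hx₂n).1
  refine ⟨⟨?_, fun h => ?_⟩, hmain⟩
  · rintro ⟨x, hd0, hfix, hne⟩
    have hqx := hqzero x hd0 hfix hne
    apply hsq.mp
    exact ⟨2 * C * x + β, by linear_combination hDdef - 4 * C * hqx⟩
  · obtain ⟨x₁, x₂, _, hiff, _⟩ := hmain h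
    exact ⟨x₁, (hiff x₁).mpr (Or.inl rfl)⟩
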